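/- Define d_{u,n} by d_{u,n} = 1 for 1 ≤ n ≤ 2u − 1 and d_{u,n} = d_{u,n−u} + d_{u,n−2u+1} for n ≥ 2u. Then for every integer u ≥ 2 and every positive integer n, d_{u,n} = Σ_{i=0}^{⌊(n−1)/u⌋} C(⌊(n + (u−1)i − u)/(2u−1)⌋, i). -/

import Mathlib

/-- The parent sequence: `dseq u n = 1` for `1 ≤ n ≤ 2u - 1` and
`dseq u n = dseq u (n - u) + dseq u (n - (2u - 1))` for `n ≥ 2u`
(the clause `u < 2` is only for termination; all statements assume `u ≥ 2`). -/
def dseq (u : ℕ) : ℕ → ℕ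
  | n =>
    if _h : n ≤ 2 * u - 1 ∨ u < 2 then 1
    else dseq u (n - u) + dseq u (n - (2 * u - 1))
  termination_by n => n
  decreasing_by all_goals omega

theorem dseq_formula (u n : ℕ) (hu : 2 ≤ u) (hn : 1 ≤ n) :
    dseq u n =
      ∑ i ∈ Finset.range ((n - 1) / u + 1),
        ((n + (u - 1) * i - u) / (2 * u - 1)).choose i := by
  induction n using Nat.strong_induction_on with
  | _ n ih =>
  rw [dseq]
  split_ifs with h
  · -- base case : 1 ≤ n ≤ 2u - 1
    have hn2 : n ≤ 2 * u - 1 := by omega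
    by_cases hnu : n ≤ u
    · have h0 : (n - 1) / u = 0 := Nat.div_eq_of_lt (by omega)
      rw [h0]
      simp
    · have h1 : (n - 1) / u = 1 := Nat.div_eq_of_lt_le (by omega) (by omega)
      rw [h1, Finset.sum_range_succ, Finset.sum_range_one]
      have h2 : (n + (u - 1) * 1 - u) / (2 * u - 1) = 0 :=
        Nat.div_eq_of_lt (by omega)
      rw [h2]
      simp
  · push_neg at h
    have hn2u : 2 * u ≤ n := by omega
    have hupos : 0 < u := by omega
    have h2u : 0 < 2 * u - 1 := by omega
    have ih1 := ih (n - u) (by omega) (by omega)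
    have ih2 := ih (n - (2 * u - 1)) (by omega) (by omega)
    have hKeq : (n - 1) / u = (n - u - 1) / u + 1 := by
      rw [Nat.div_eq_sub_div hupos (by omega : u ≤ n - 1)]
      congr 2
      omega
    set K := (n - u - 1) / u with hKdef
    set K2 := (n - (2 * u - 1) - 1) / u with hK2def
    have hK2K : K2 ≤ K := Nat.div_le_div_right (by omega)
    have key : ∀ i : ℕ, (n + (u - 1) * (i + 1) - u) / (2 * u - 1)
        = ((n - u + (u - 1) * i - u) / (2 * u - 1)) + 1 := by
      intro i
      have hmul : (u - 1) * (i + 1) = (u - 1) * i + (u - 1) := by ring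
      have e : n + (u - 1) * (i + 1) - u
          = (n - u + (u - 1) * i - u) + (2 * u - 1) := by omega
      rw [e, Nat.add_div_right _ h2u]
    have key2 : ∀ i : ℕ, (n + (u - 1) * (i + 1) - u) / (2 * u - 1)
        = ((n - (2 * u - 1) + (u - 1) * (i + 1) - u) / (2 * u - 1)) + 1 := by
      intro i
      have hB : u - 1 ≤ (u - 1) * (i + 1) := Nat.le_mul_of_pos_right _ (by omega)
      have e : n + (u - 1) * (i + 1) - u
          = (n - (2 * u - 1) + (u - 1) * (i + 1) - u) + (2 * u - 1) := by omega
      rw [e, Nat.add_div_right _ h2u]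
    have hgh : ∀ i : ℕ, (n - u + (u - 1) * i - u) / (2 * u - 1)
        = (n - (2 * u - 1) + (u - 1) * (i + 1) - u) / (2 * u - 1) := by
      intro i
      have h1 := key i
      have h2 := key2 i
      omega
    have hzero : ∀ i ∈ Finset.range (K + 1), i ∉ Finset.range K2 →
        ((n - u + (u - 1) * i - u) / (2 * u - 1)).choose (i + 1) = 0 := by
      intro i _ hi2
      simp only [Finset.mem_range, not_lt] at hi2
      apply Nat.choose_eq_zero_of_lt
      have hlt : n - (2 * u - 1) - 1 < (i + 1) * u :=
        (Nat.div_lt_iff_lt_mul hupos).mp (by omega)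
      have hiden : (i + 1) * (2 * u - 1) = (i + 1) * u + (u - 1) * i + (u - 1) := by
        zify [show (1:ℕ) ≤ u by omega, show (1:ℕ) ≤ 2 * u by omega]
        ring
      have hY : n - u + (u - 1) * i - u < (i + 1) * (2 * u - 1) := by omega
      exact (Nat.div_lt_iff_lt_mul h2u).mpr hY
    have pascal : ∀ i : ℕ,
        ((n + (u - 1) * (i + 1) - u) / (2 * u - 1)).choose (i + 1)
        = ((n - u + (u - 1) * i - u) / (2 * u - 1)).choose i
          + ((n - u + (u - 1) * i - u) / (2 * u - 1)).choose (i + 1) := by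
      intro i
      rw [key i]
      exact Nat.choose_succ_succ _ _
    rw [hKeq, Finset.sum_range_succ']
    have hsplit : ∑ i ∈ Finset.range (K + 1),
          ((n + (u - 1) * (i + 1) - u) / (2 * u - 1)).choose (i + 1)
        = (∑ i ∈ Finset.range (K + 1),
            ((n - u + (u - 1) * i - u) / (2 * u - 1)).choose i)
          + ∑ i ∈ Finset.range (K + 1),
            ((n - u + (u - 1) * i - u) / (2 * u - 1)).choose (i + 1) := by
      rw [← Finset.sum_add_distrib]
      exact Finset.sum_congr rfl fun i _ => pascal i
    have hsum2 : ∑ i ∈ Finset.range (K + 1),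
          ((n - u + (u - 1) * i - u) / (2 * u - 1)).choose (i + 1)
        = ∑ i ∈ Finset.range K2,
          ((n - u + (u - 1) * i - u) / (2 * u - 1)).choose (i + 1) :=
      (Finset.sum_subset (Finset.range_subset_range.mpr (by omega)) hzero).symm
    have ih2' : dseq u (n - (2 * u - 1))
        = (∑ i ∈ Finset.range K2,
            ((n - u + (u - 1) * i - u) / (2 * u - 1)).choose (i + 1)) + 1 := by
      rw [ih2, Finset.sum_range_succ']
      congr 1
      · exact Finset.sum_congr rfl fun i _ => by rw [hgh i]
      · simp
    have hf0 : ((n + (u - 1) * 0 - u) / (2 * u - 1)).choose 0 = 1 :=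
      Nat.choose_zero_right _
    rw [hsplit, hsum2, hf0, ih1, ih2']
    ring
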